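/- Let E be a real normed vector space and φ : E → ℝ → E a map such that for each t ∈ ℝ the map y ↦ φ(y,t) is differentiable. Let A : E → ℝ → (E →L[ℝ] ℝ) satisfy: (i) A(x,0) = 0 for all x; (ii) the cocycle identity (A(φ(x,t), t′)).comp(fderiv ℝ (y ↦ φ(y,t)) x) − A(x, t+t′) + A(x,t) = 0 for all x, t, t′; and (iii) for each x the map t ↦ A(x,t) is continuously differentiable. Define α(x) to be the derivative of t ↦ A(x,t) at t = 0. Then A(x,t) = ∫₀ᵗ (α(φ(x,s))).comp(fderiv ℝ (y ↦ φ(y,s)) x) ds for all x and t. In particular, A is uniquely determined by α. -/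

import Mathlib

/-- A relative-1-form cocycle over a flow is recovered from its derivative at time `0` by
integrating the pulled-back 1-form along the flow: if `A(x,0) = 0`, `A` satisfies the cocycle
identity `A(φ(x,t),t') ∘ D(φ_t)(x) − A(x,t+t') + A(x,t) = 0`, and `t ↦ A(x,t)` is continuously
differentiable, then with `α(x) = (d/dt)|₀ A(x,t)` one has
`A(x,t) = ∫₀ᵗ α(φ(x,s)) ∘ D(φ_s)(x) ds`; in particular `A` is uniquely determined by `α`. -/
theorem relative_one_form_cocycle_determined_by_derivative
    {E : Type*} [NormedAddCommGroup E] [NormedSpace ℝ E]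
    (φ : E → ℝ → E) (hφ : ∀ t : ℝ, Differentiable ℝ (fun y => φ y t))
    (A : E → ℝ → (E →L[ℝ] ℝ))
    (hzero : ∀ x : E, A x 0 = 0)
    (hcocycle : ∀ (x : E) (t t' : ℝ),
      (A (φ x t) t').comp (fderiv ℝ (fun y => φ y t) x) - A x (t + t') + A x t = 0)
    (hC1 : ∀ x : E, ContDiff ℝ 1 (A x))
    (α : E → (E →L[ℝ] ℝ)) (hα : ∀ x : E, α x = deriv (A x) 0) :
    ∀ (x : E) (t : ℝ),
      A x t = ∫ s in (0 : ℝ)..t, (α (φ x s)).comp (fderiv ℝ (fun y => φ y s) x) := by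
  intro x t
  have hdiff : ∀ z : E, Differentiable ℝ (A z) := fun z => (hC1 z).differentiable one_ne_zero
  -- key: deriv (A x) s = (α (φ x s)).comp (fderiv ℝ (fun y => φ y s) x)
  have key : ∀ s : ℝ, deriv (A x) s = (α (φ x s)).comp (fderiv ℝ (fun y => φ y s) x) := by
    intro s
    set L := fderiv ℝ (fun y => φ y s) x with hL
    have heq : ∀ t' : ℝ, A x (s + t') = (A (φ x s) t').comp L + A x s := by
      intro t'
      have h := hcocycle x s t'
      have h2 : ((A (φ x s) t').comp L + A x s) - A x (s + t') = 0 := by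
        rw [← h]; abel
      exact (sub_eq_zero.mp h2).symm
    -- derivative of RHS at 0
    have hu : HasDerivAt (A (φ x s)) (α (φ x s)) 0 := by
      rw [hα]
      exact ((hdiff (φ x s)) 0).hasDerivAt
    have hg : HasDerivAt (fun t' => (A (φ x s) t').comp L + A x s)
        ((α (φ x s)).comp L) 0 := by
      have h1 : HasDerivAt (fun t' : ℝ => (A (φ x s) t').comp L)
          ((α (φ x s)).comp L + (A (φ x s) 0).comp 0) 0 :=
        hu.clm_comp (hasDerivAt_const 0 L)
      simpa using h1.add_const (A x s)
    -- derivative of LHS at 0 is deriv (A x) s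
    have hl : HasDerivAt (fun t' : ℝ => A x (s + t')) (deriv (A x) s) 0 := by
      have h1 : HasDerivAt (fun t' : ℝ => s + t') 1 0 := by
        simpa using (hasDerivAt_id (0:ℝ)).const_add s
      have h2 : HasDerivAt (A x) (deriv (A x) (s + 0)) (s + 0) :=
        ((hdiff x) _).hasDerivAt
      have := h2.scomp 0 h1
      simpa [Function.comp_def] using this
    have : HasDerivAt (fun t' : ℝ => A x (s + t')) ((α (φ x s)).comp L) 0 := by
      apply hg.congr_of_eventuallyEq
      filter_upwards with t' using (heq t')
    exact hl.unique this
  have hcont : Continuous (deriv (A x)) := (hC1 x).continuous_deriv le_rfl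
  have hint : ∫ s in (0:ℝ)..t, deriv (A x) s = A x t - A x 0 :=
    intervalIntegral.integral_deriv_eq_sub (fun s _ => (hdiff x) s)
      hcont.continuousOn.intervalIntegrable
  have : ∫ s in (0:ℝ)..t, (α (φ x s)).comp (fderiv ℝ (fun y => φ y s) x)
      = ∫ s in (0:ℝ)..t, deriv (A x) s := by
    refine intervalIntegral.integral_congr fun s _ => ?_
    exact (key s).symm
  rw [this, hint, hzero]
  simp
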